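/- arXiv:2002.00268 — 9 statements merged into one kernel-verified Lean document; each statement's English description precedes it below -/
import Mathlib

section
/- Let n ∈ ℕ and let I be a C^∞-radical ideal of C^∞(ℝ^n). Then for all f, g ∈ C^∞(ℝ^n): f + I ≺ g + I if and only if there exists φ ∈ I such that f(x) < g(x) for every x ∈ Z(φ). -/
noncomputable section

/-- The ring `C^∞(ℝ^n)` of infinitely differentiable functions `ℝ^n → ℝ`, as a subring of
the ring of all functions `ℝ^n → ℝ` with pointwise operations. -/
def CinfN (n : ℕ) : Subring ((Fin n → ℝ) → ℝ) where
  carrier := {f | ContDiff ℝ (⊤ : ℕ∞) f}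
  zero_mem' := show ContDiff ℝ (⊤ : ℕ∞) (fun _ => (0:ℝ)) from contDiff_const
  one_mem' := show ContDiff ℝ (⊤ : ℕ∞) (fun _ => (1:ℝ)) from contDiff_const
  add_mem' := fun {a b} (hf : ContDiff ℝ (⊤ : ℕ∞) a) (hg : ContDiff ℝ (⊤ : ℕ∞) b) => hf.add hg
  mul_mem' := fun {a b} (hf : ContDiff ℝ (⊤ : ℕ∞) a) (hg : ContDiff ℝ (⊤ : ℕ∞) b) => hf.mul hg
  neg_mem' := fun {a} (hf : ContDiff ℝ (⊤ : ℕ∞) a) => hf.neg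

/-- The zeroset of a smooth function on `ℝ^n`. -/
def ZN {n : ℕ} (f : CinfN n) : Set (Fin n → ℝ) := {x | (f : (Fin n → ℝ) → ℝ) x = 0}

/-- An ideal `I ⊆ C^∞(ℝ^n)` is `C^∞`-radical iff it contains every function whose zeroset
contains the zeroset of some member of `I`. -/
def IsCinfRadicalN {n : ℕ} (I : Ideal (CinfN n)) : Prop :=
  ∀ g : CinfN n, (∃ f ∈ I, ZN f ⊆ ZN g) → g ∈ I

end

/-- For a `C^∞`-radical ideal `I ⊆ C^∞(ℝ^n)` and `f, g ∈ C^∞(ℝ^n)`: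
`f + I ≺ g + I` (i.e. `(g − f) − u² ∈ I` for some `u` whose class mod `I` is invertible)
iff there is `φ ∈ I` with `f < g` pointwise on `Z(φ)`. -/
theorem statement2 (n : ℕ) (I : Ideal (CinfN n)) (hI : IsCinfRadicalN I) (f g : CinfN n) :
    (∃ u : CinfN n, IsUnit (Ideal.Quotient.mk I u) ∧ (g - f) - u ^ 2 ∈ I) ↔
      ∃ φ ∈ I, ∀ x ∈ ZN φ, (f : (Fin n → ℝ) → ℝ) x < (g : (Fin n → ℝ) → ℝ) x := by
  have hsm : ∀ p : CinfN n, ContDiff ℝ (⊤ : ℕ∞) (p : (Fin n → ℝ) → ℝ) := fun p => p.2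
  constructor
  · rintro ⟨u, hu, ha⟩
    obtain ⟨b, hb⟩ := isUnit_iff_exists_inv.mp hu
    obtain ⟨v, rfl⟩ := Ideal.Quotient.mk_surjective b
    have hbI : u * v - 1 ∈ I := by
      rw [← Ideal.Quotient.eq_zero_iff_mem, RingHom.map_sub, RingHom.map_mul, RingHom.map_one,
        hb, sub_self]
    set a : CinfN n := (g - f) - u ^ 2 with ha_def
    set c : CinfN n := u * v - 1 with hc_def
    refine ⟨a * a + c * c, I.add_mem (I.mul_mem_left a ha) (I.mul_mem_left c hbI), ?_⟩
    intro x hx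
    have hx' : (a : (Fin n → ℝ) → ℝ) x * (a : (Fin n → ℝ) → ℝ) x
        + (c : (Fin n → ℝ) → ℝ) x * (c : (Fin n → ℝ) → ℝ) x = 0 := hx
    have haa : 0 ≤ (a : (Fin n → ℝ) → ℝ) x * (a : (Fin n → ℝ) → ℝ) x := mul_self_nonneg _
    have hcc : 0 ≤ (c : (Fin n → ℝ) → ℝ) x * (c : (Fin n → ℝ) → ℝ) x := mul_self_nonneg _
    have ha0 : (a : (Fin n → ℝ) → ℝ) x = 0 := by
      have : (a : (Fin n → ℝ) → ℝ) x * (a : (Fin n → ℝ) → ℝ) x = 0 := by linarith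
      exact mul_self_eq_zero.mp this
    have hc0 : (c : (Fin n → ℝ) → ℝ) x = 0 := by
      have : (c : (Fin n → ℝ) → ℝ) x * (c : (Fin n → ℝ) → ℝ) x = 0 := by linarith
      exact mul_self_eq_zero.mp this
    have ha0' : (g : (Fin n → ℝ) → ℝ) x - (f : (Fin n → ℝ) → ℝ) x
        - (u : (Fin n → ℝ) → ℝ) x ^ 2 = 0 := ha0
    have hc0' : (u : (Fin n → ℝ) → ℝ) x * (v : (Fin n → ℝ) → ℝ) x - 1 = 0 := hc0
    have hune : (u : (Fin n → ℝ) → ℝ) x ≠ 0 := by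
      intro h0; rw [h0] at hc0'; simp at hc0'
    have : (0:ℝ) < (u : (Fin n → ℝ) → ℝ) x ^ 2 := by positivity
    linarith
  · rintro ⟨φ, hφI, hφ⟩
    set h : CinfN n := g - f with hh
    have hhx : ∀ x, (h : (Fin n → ℝ) → ℝ) x
        = (g : (Fin n → ℝ) → ℝ) x - (f : (Fin n → ℝ) → ℝ) x := fun _ => rfl
    have hZφ : IsClosed (ZN φ) :=
      isClosed_eq (hsm φ).continuous continuous_const
    have hT : IsClosed {x : Fin n → ℝ | (h : (Fin n → ℝ) → ℝ) x ≤ 0} :=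
      isClosed_le (hsm h).continuous continuous_const
    have hd : Disjoint {x : Fin n → ℝ | (h : (Fin n → ℝ) → ℝ) x ≤ 0} (ZN φ) := by
      rw [Set.disjoint_left]
      intro x hx hxZ
      have h1 := hφ x hxZ
      have h2 : (0:ℝ) < (h : (Fin n → ℝ) → ℝ) x := by rw [hhx]; linarith
      exact absurd hx (not_le.mpr h2)
    obtain ⟨χ, hχ0, hχ1, hχmem⟩ :=
      exists_contMDiffMap_zero_one_of_isClosed (modelWithCornersSelf ℝ (Fin n → ℝ)) (n := (⊤ : ℕ∞)) hT hZφ hd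
    have hχsm : ContDiff ℝ (⊤ : ℕ∞) (χ : (Fin n → ℝ) → ℝ) := by
      have h3 := χ.contMDiff
      rw [contMDiff_iff_contDiff] at h3
      exact h3
    set w : (Fin n → ℝ) → ℝ :=
      fun x => χ x * (h : (Fin n → ℝ) → ℝ) x + (1 - χ x) with hw
    have hwsm : ContDiff ℝ (⊤ : ℕ∞) w :=
      (hχsm.mul (hsm h)).add (contDiff_const.sub hχsm)
    have hwpos : ∀ x, 0 < w x := by
      intro x
      rcases le_or_gt ((h : (Fin n → ℝ) → ℝ) x) 0 with hle | hlt
      · have h4 : χ x = 0 := hχ0 hle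
        simp [hw, h4]
      · have h0 : 0 ≤ χ x := (hχmem x).1
        have h1 : χ x ≤ 1 := (hχmem x).2
        show 0 < χ x * (h : (Fin n → ℝ) → ℝ) x + (1 - χ x)
        rcases le_or_gt ((h : (Fin n → ℝ) → ℝ) x) 1 with hle | hgt
        · nlinarith [mul_nonneg (sub_nonneg.mpr h1) (sub_nonneg.mpr hle)]
        · nlinarith [mul_nonneg h0 (by linarith : (0:ℝ) ≤ (h : (Fin n → ℝ) → ℝ) x - 1)]
    set u : (Fin n → ℝ) → ℝ := fun x => Real.sqrt (w x) with hu
    have husm : ContDiff ℝ (⊤ : ℕ∞) u := by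
      rw [contDiff_iff_contDiffAt]
      intro x
      exact (hwsm.contDiffAt).sqrt (ne_of_gt (hwpos x))
    have hupos : ∀ x, 0 < u x := fun x => Real.sqrt_pos.mpr (hwpos x)
    have husq : ∀ x, u x ^ 2 = w x := fun x => Real.sq_sqrt (hwpos x).le
    set U : CinfN n := ⟨u, husm⟩ with hU
    refine ⟨U, ?_, ?_⟩
    · have hinv : ContDiff ℝ (⊤ : ℕ∞) (fun x => (u x)⁻¹) :=
        husm.inv (fun x => ne_of_gt (hupos x))
      have hUunit : IsUnit U := by
        refine isUnit_iff_exists_inv.mpr ⟨⟨fun x => (u x)⁻¹, hinv⟩, ?_⟩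
        ext x
        exact mul_inv_cancel₀ (ne_of_gt (hupos x))
      exact hUunit.map (Ideal.Quotient.mk I)
    · refine hI _ ⟨φ, hφI, ?_⟩
      intro x hx
      have hχx : χ x = 1 := hχ1 hx
      show ((g - f - U ^ 2 : CinfN n) : (Fin n → ℝ) → ℝ) x = 0
      have h5 : ((g - f - U ^ 2 : CinfN n) : (Fin n → ℝ) → ℝ) x
          = (h : (Fin n → ℝ) → ℝ) x - u x ^ 2 := rfl
      rw [h5, husq x, hw]
      simp [hχx]
end

section
/- Let E be an arbitrary set and let I be a C^∞-radical ideal of C^∞(ℝ^E). Then for every f ∈ C^∞(ℝ^E): the class f + I is invertible in the quotient ring C^∞(ℝ^E)/I if and only if there exists φ ∈ I such that f(v) ≠ 0 for every v ∈ Z(φ). -/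
noncomputable section

open Set

/-- The continuous linear "restriction" map `ℝ^t → ℝ^s` for `s ⊆ t`. -/
def restrCLM {E : Type} (s t : Finset E) (h : s ⊆ t) : (↥t → ℝ) →L[ℝ] (↥s → ℝ) :=
  LinearMap.toContinuousLinearMap
    (LinearMap.funLeft ℝ ℝ (fun i : ↥s => (⟨i.1, h i.2⟩ : ↥t)))

/-- A function `f : ℝ^E → ℝ` is (`C^∞`-)smooth iff it factors through the projection onto
finitely many coordinates via an infinitely differentiable function. -/
def IsCinf {E : Type} (f : (E → ℝ) → ℝ) : Prop :=
  ∃ (s : Finset E) (g : (↥s → ℝ) → ℝ),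
    ContDiff ℝ (⊤ : ℕ∞) g ∧ ∀ v : E → ℝ, f v = g (fun i => v i.1)

theorem IsCinf.enlarge {E : Type} {f : (E → ℝ) → ℝ} {s : Finset E} {g : (↥s → ℝ) → ℝ}
    (hg : ContDiff ℝ (⊤ : ℕ∞) g) (hfg : ∀ v, f v = g (fun i => v i.1))
    (t : Finset E) (hst : s ⊆ t) :
    ∃ g' : (↥t → ℝ) → ℝ, ContDiff ℝ (⊤ : ℕ∞) g' ∧ ∀ v, f v = g' (fun i => v i.1) := by
  refine ⟨g ∘ restrCLM s t hst, hg.comp (restrCLM s t hst).contDiff, fun v => ?_⟩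
  have h1 : (restrCLM s t hst) (fun i : ↥t => v i.1) = fun i : ↥s => v i.1 := rfl
  simp only [Function.comp_apply, h1]
  exact hfg v

/-- The ring `C^∞(ℝ^E)` of smooth functions `ℝ^E → ℝ`, as a subring of the ring of all
functions `ℝ^E → ℝ` with pointwise operations. -/
def Cinf (E : Type) : Subring ((E → ℝ) → ℝ) where
  carrier := {f | IsCinf f}
  zero_mem' := ⟨∅, fun _ => 0, contDiff_const, fun _ => rfl⟩
  one_mem' := ⟨∅, fun _ => 1, contDiff_const, fun _ => rfl⟩
  neg_mem' := by
    rintro f ⟨s, g, hg, hfg⟩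
    exact ⟨s, -g, hg.neg, fun v => by simp [hfg v]⟩
  add_mem' := by
    rintro f₁ f₂ ⟨s, g₁, hg₁, hfg₁⟩ ⟨t, g₂, hg₂, hfg₂⟩
    haveI := Classical.decEq E
    obtain ⟨g₁', hg₁', hfg₁'⟩ := IsCinf.enlarge hg₁ hfg₁ (s ∪ t) Finset.subset_union_left
    obtain ⟨g₂', hg₂', hfg₂'⟩ := IsCinf.enlarge hg₂ hfg₂ (s ∪ t) Finset.subset_union_right
    exact ⟨s ∪ t, g₁' + g₂', hg₁'.add hg₂', fun v => by
      simp only [Pi.add_apply, hfg₁' v, hfg₂' v]⟩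
  mul_mem' := by
    rintro f₁ f₂ ⟨s, g₁, hg₁, hfg₁⟩ ⟨t, g₂, hg₂, hfg₂⟩
    haveI := Classical.decEq E
    obtain ⟨g₁', hg₁', hfg₁'⟩ := IsCinf.enlarge hg₁ hfg₁ (s ∪ t) Finset.subset_union_left
    obtain ⟨g₂', hg₂', hfg₂'⟩ := IsCinf.enlarge hg₂ hfg₂ (s ∪ t) Finset.subset_union_right
    exact ⟨s ∪ t, g₁' * g₂', hg₁'.mul hg₂', fun v => by
      simp only [Pi.mul_apply, hfg₁' v, hfg₂' v]⟩

/-- The zeroset of a smooth function on `ℝ^E`. -/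
def Z {E : Type} (f : Cinf E) : Set (E → ℝ) := {v | (f : (E → ℝ) → ℝ) v = 0}

/-- An ideal `I ⊆ C^∞(ℝ^E)` is `C^∞`-radical iff it contains every function whose zeroset
contains the zeroset of some member of `I`. -/
def IsCinfRadical {E : Type} (I : Ideal (Cinf E)) : Prop :=
  ∀ g : Cinf E, (∃ f ∈ I, Z f ⊆ Z g) → g ∈ I

/-- The collection of zerosets of `ℝ^E`. -/
def zeroSets (E : Type) : Set (Set (E → ℝ)) := {X | ∃ f : Cinf E, X = Z f}

/-- A filter of zerosets of `ℝ^E`. -/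
def IsZFilter {E : Type} (Φ : Set (Set (E → ℝ))) : Prop :=
  Φ ⊆ zeroSets E ∧ (Set.univ : Set (E → ℝ)) ∈ Φ ∧
    (∀ F ∈ Φ, ∀ G ∈ Φ, F ∩ G ∈ Φ) ∧
    (∀ F ∈ Φ, ∀ H ∈ zeroSets E, F ⊆ H → H ∈ Φ)

/-- `Ŝ`: the set of zerosets of members of a set `S ⊆ C^∞(ℝ^E)`. -/
def hatSet {E : Type} (S : Set (Cinf E)) : Set (Set (E → ℝ)) := {X | ∃ f ∈ S, X = Z f}

/-- `Î`: the set of zerosets of members of the ideal `I`. -/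
def hatI {E : Type} (I : Ideal (Cinf E)) : Set (Set (E → ℝ)) := hatSet (I : Set (Cinf E))

/-- `Φ̌`: the set of smooth functions whose zeroset belongs to `Φ`. -/
def checkSet {E : Type} (Φ : Set (Set (E → ℝ))) : Set (Cinf E) := {f : Cinf E | Z f ∈ Φ}

end


theorem aux_inv_mem {E : Type} (f φ : Cinf E)
    (h : ∀ v, (f : (E → ℝ) → ℝ) v ≠ 0 ∨ (φ : (E → ℝ) → ℝ) v ≠ 0) :
    IsCinf (fun v => (f : (E → ℝ) → ℝ) v /
      ((f : (E → ℝ) → ℝ) v ^ 2 + (φ : (E → ℝ) → ℝ) v ^ 2)) := by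
  classical
  obtain ⟨s, F, hF, hfF⟩ := f.2
  obtain ⟨t, G, hG, hgG⟩ := φ.2
  obtain ⟨F', hF', hfF'⟩ := IsCinf.enlarge hF hfF (s ∪ t) Finset.subset_union_left
  obtain ⟨G', hG', hgG'⟩ := IsCinf.enlarge hG hgG (s ∪ t) Finset.subset_union_right
  have key : ∀ w : ↥(s ∪ t) → ℝ, F' w ^ 2 + G' w ^ 2 ≠ 0 := by
    intro w
    set v : E → ℝ := fun e => if he : e ∈ s ∪ t then w ⟨e, he⟩ else 0 with hv
    have hw : (fun i : ↥(s ∪ t) => v i.1) = w := by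
      funext i
      show (if he : (i : E) ∈ s ∪ t then w ⟨i, he⟩ else 0) = w i
      rw [dif_pos i.2]
    have h1 : (f : (E → ℝ) → ℝ) v = F' w := by rw [hfF' v, hw]
    have h2 : (φ : (E → ℝ) → ℝ) v = G' w := by rw [hgG' v, hw]
    rcases h v with hne | hne <;> rw [← h1, ← h2] <;> positivity
  refine ⟨s ∪ t, fun w => F' w / (F' w ^ 2 + G' w ^ 2),
    ContDiff.div hF' (by fun_prop) key, fun v => ?_⟩
  show (f : (E → ℝ) → ℝ) v / ((f : (E → ℝ) → ℝ) v ^ 2 + (φ : (E → ℝ) → ℝ) v ^ 2) =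
    F' (fun i => v i.1) / (F' (fun i => v i.1) ^ 2 + G' (fun i => v i.1) ^ 2)
  rw [hfF' v, hgG' v]

/-- For a `C^∞`-radical ideal `I ⊆ C^∞(ℝ^E)` and `f ∈ C^∞(ℝ^E)`:
`f + I` is invertible in `C^∞(ℝ^E)/I` iff there is `φ ∈ I` with `f` nonvanishing on `Z(φ)`. -/
theorem statement4 (E : Type) (I : Ideal (Cinf E)) (hI : IsCinfRadical I) (f : Cinf E) :
    IsUnit (Ideal.Quotient.mk I f) ↔
      ∃ φ ∈ I, ∀ v ∈ Z φ, (f : (E → ℝ) → ℝ) v ≠ 0 := by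
  constructor
  · rintro hu
    obtain ⟨b, hb⟩ := hu.exists_right_inv
    obtain ⟨g, rfl⟩ := Ideal.Quotient.mk_surjective b
    have hmem : f * g - 1 ∈ I := by
      refine Ideal.Quotient.eq.mp ?_
      rw [map_mul, map_one]
      exact hb
    refine ⟨f * g - 1, hmem, fun v hv => ?_⟩
    have : (f : (E → ℝ) → ℝ) v * (g : (E → ℝ) → ℝ) v - 1 = 0 := by
      simpa [Z] using hv
    intro h0
    rw [h0] at this
    simp at this
  · rintro ⟨φ, hφI, hφ⟩
    have h : ∀ v, (f : (E → ℝ) → ℝ) v ≠ 0 ∨ (φ : (E → ℝ) → ℝ) v ≠ 0 := by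
      intro v
      by_cases hz : (φ : (E → ℝ) → ℝ) v = 0
      · exact Or.inl (hφ v hz)
      · exact Or.inr hz
    set g : Cinf E := ⟨fun v => (f : (E → ℝ) → ℝ) v /
      ((f : (E → ℝ) → ℝ) v ^ 2 + (φ : (E → ℝ) → ℝ) v ^ 2), aux_inv_mem f φ h⟩ with hgdef
    have hmem : f * g - 1 ∈ I := by
      refine hI _ ⟨φ, hφI, fun v hv => ?_⟩
      have hz : (φ : (E → ℝ) → ℝ) v = 0 := hv
      have hf : (f : (E → ℝ) → ℝ) v ≠ 0 := hφ v hz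
      show (f : (E → ℝ) → ℝ) v * (g : (E → ℝ) → ℝ) v - 1 = 0
      simp only [hgdef]
      rw [hz]
      field_simp
      ring
    refine IsUnit.of_mul_eq_one (Ideal.Quotient.mk I g) ?_
    have := Ideal.Quotient.eq.mpr hmem
    rw [map_mul, map_one] at this
    exact this
end

section
/- Let E be an arbitrary set and let I be a C^∞-radical ideal of C^∞(ℝ^E). Then for all f, g ∈ C^∞(ℝ^E): f + I ≺ g + I if and only if there exists φ ∈ I such that f(v) < g(v) for every v ∈ Z(φ). -/
/-- Evaluation of a smooth function, as plain coercion. -/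
def ev {E : Type} (a : Cinf E) : (E → ℝ) → ℝ := a

lemma ev_sub {E : Type} (a b : Cinf E) (v : E → ℝ) : ev (a - b) v = ev a v - ev b v := rfl
lemma ev_mul {E : Type} (a b : Cinf E) (v : E → ℝ) : ev (a * b) v = ev a v * ev b v := rfl
lemma ev_add {E : Type} (a b : Cinf E) (v : E → ℝ) : ev (a + b) v = ev a v + ev b v := rfl
lemma ev_pow {E : Type} (a : Cinf E) (k : ℕ) (v : E → ℝ) : ev (a ^ k) v = ev a v ^ k := by
  induction k with
  | zero => rfl
  | succ k ih => rw [pow_succ, pow_succ, ← ih]; rfl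
lemma ev_one {E : Type} (v : E → ℝ) : ev (1 : Cinf E) v = 1 := rfl

lemma mem_Z_iff {E : Type} (a : Cinf E) (v : E → ℝ) : v ∈ Z a ↔ ev a v = 0 := Iff.rfl

open Manifold in
lemma exists_lam {n : Type} [Fintype n] (h' φ' : (n → ℝ) → ℝ)
    (hh : Continuous h') (hφ : Continuous φ') (key : ∀ x, φ' x = 0 → 0 < h' x) :
    ∃ lam : (n → ℝ) → ℝ, ContDiff ℝ (⊤ : ℕ∞) lam ∧
      ∀ x, 0 < h' x + lam x * (φ' x) ^ 2 := by
  obtain ⟨lam, hlam⟩ := exists_contMDiffMap_forall_mem_convex_of_local_const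
    (𝓘(ℝ, n → ℝ)) (F := ℝ) (n := (⊤ : ℕ∞)) (t := fun x => {y : ℝ | 0 < h' x + y * (φ' x) ^ 2})
    (fun x => by
      intro y₁ hy₁ y₂ hy₂ a b ha hb hab
      simp only [Set.mem_setOf_eq, smul_eq_mul] at *
      have h3 : h' x + (a * y₁ + b * y₂) * (φ' x) ^ 2
          = a * (h' x + y₁ * (φ' x) ^ 2) + b * (h' x + y₂ * (φ' x) ^ 2) := by
        have hb' : b = 1 - a := by linarith
        rw [hb']; ring
      rw [h3]
      rcases ha.lt_or_eq with ha' | ha'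
      · exact add_pos_of_pos_of_nonneg (mul_pos ha' hy₁) (mul_nonneg hb hy₂.le)
      · have hb1 : b = 1 := by linarith
        rw [← ha', hb1]; simpa using hy₂)
    (fun x => by
      by_cases hx : φ' x = 0
      · refine ⟨0, ?_⟩
        have hpos := key x hx
        have hc : ContinuousAt (fun y => h' y + (0 : ℝ) * (φ' y) ^ 2) x :=
          (hh.add (continuous_const.mul (hφ.pow 2))).continuousAt
        have h0 : 0 < h' x + (0 : ℝ) * (φ' x) ^ 2 := by simpa using hpos
        exact hc.eventually (eventually_gt_nhds h0)
      · refine ⟨(1 - h' x) / (φ' x) ^ 2, ?_⟩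
        have hc : ContinuousAt (fun y => h' y + ((1 - h' x) / (φ' x) ^ 2) * (φ' y) ^ 2) x :=
          (hh.add (continuous_const.mul (hφ.pow 2))).continuousAt
        have h0 : 0 < h' x + ((1 - h' x) / (φ' x) ^ 2) * (φ' x) ^ 2 := by
          rw [div_mul_cancel₀]
          · linarith
          · positivity
        exact hc.eventually (eventually_gt_nhds h0))
  exact ⟨lam, contMDiff_iff_contDiff.mp lam.contMDiff, hlam⟩

set_option maxHeartbeats 1000000 in
set_option synthInstance.maxHeartbeats 200000 in
/-- For a `C^∞`-radical ideal `I ⊆ C^∞(ℝ^E)` and `f, g ∈ C^∞(ℝ^E)`: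
`f + I ≺ g + I` (i.e. `(g − f) − u² ∈ I` for some `u` whose class mod `I` is invertible)
iff there is `φ ∈ I` with `f < g` pointwise on `Z(φ)`. -/
theorem statement5 (E : Type) (I : Ideal (Cinf E)) (hI : IsCinfRadical I) (f g : Cinf E) :
    (∃ u : Cinf E, IsUnit (Ideal.Quotient.mk I u) ∧ (g - f) - u ^ 2 ∈ I) ↔
      ∃ φ ∈ I, ∀ v ∈ Z φ, (f : (E → ℝ) → ℝ) v < (g : (E → ℝ) → ℝ) v := by
  constructor
  · rintro ⟨u, hu, hmem⟩
    obtain ⟨w, hw⟩ := Ideal.Quotient.mk_surjective (I := I) ↑hu.unit⁻¹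
    have hw1 : u * w - 1 ∈ I := by
      have h1 : Ideal.Quotient.mk I (u * w) = Ideal.Quotient.mk I 1 := by
        rw [map_mul, hw, map_one, IsUnit.mul_val_inv]
      exact Ideal.Quotient.eq.mp h1
    refine ⟨((g - f) - u ^ 2) ^ 2 + (u * w - 1) ^ 2,
      Ideal.add_mem I (Ideal.pow_mem_of_mem I hmem 2 (by norm_num))
        (Ideal.pow_mem_of_mem I hw1 2 (by norm_num)), ?_⟩
    intro v hv
    rw [mem_Z_iff] at hv
    simp only [ev_add, ev_sub, ev_mul, ev_pow, ev_one] at hv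
    show ev f v < ev g v
    have h1 : ev g v - ev f v - ev u v ^ 2 = 0 := by
      nlinarith [sq_nonneg (ev g v - ev f v - ev u v ^ 2), sq_nonneg (ev u v * ev w v - 1)]
    have h2 : ev u v * ev w v - 1 = 0 := by
      nlinarith [sq_nonneg (ev g v - ev f v - ev u v ^ 2), sq_nonneg (ev u v * ev w v - 1)]
    have hune : ev u v ≠ 0 := by
      intro h0; rw [h0] at h2; simp at h2
    nlinarith [sq_abs (ev u v), abs_pos.mpr hune]
  · rintro ⟨φ, hφI, hφ⟩
    classical
    obtain ⟨s₁, φ₁, hφ₁, hφeq₁⟩ := φ.2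
    obtain ⟨s₂, h₁, hh₁, hheq₁⟩ := (g - f).2
    set t : Finset E := s₁ ∪ s₂ with ht
    obtain ⟨φ', hφ', hφeq⟩ := IsCinf.enlarge hφ₁ hφeq₁ t Finset.subset_union_left
    obtain ⟨h', hh', hheq⟩ := IsCinf.enlarge hh₁ hheq₁ t Finset.subset_union_right
    have key : ∀ x : ↥t → ℝ, φ' x = 0 → 0 < h' x := by
      intro x hx
      set v : E → ℝ := fun e => if he : e ∈ t then x ⟨e, he⟩ else 0 with hv
      have hres : (fun i : ↥t => v i.1) = x := by
        funext i; simp [hv, i.2]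
      have hvZ : v ∈ Z φ := by
        rw [mem_Z_iff]
        show (φ : (E → ℝ) → ℝ) v = 0
        rw [hφeq v, hres, hx]
      have hlt := hφ v hvZ
      have hlt' : 0 < ev g v - ev f v := by
        have : ev f v < ev g v := hlt
        linarith
      have : h' x = ev g v - ev f v := by
        rw [← hres, ← hheq v]; rfl
      rw [this]; exact hlt'
    obtain ⟨lam, hlamC, hlam⟩ := exists_lam h' φ' hh'.continuous hφ'.continuous key
    set α : (↥t → ℝ) → ℝ := fun x => h' x + lam x * (φ' x) ^ 2 with hα
    have hαpos : ∀ x, 0 < α x := fun x => hlam x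
    have hαC : ContDiff ℝ (⊤ : ℕ∞) α := hh'.add (hlamC.mul (hφ'.pow 2))
    set u' : (↥t → ℝ) → ℝ := fun x => Real.sqrt (α x) with hu'
    have hu'C : ContDiff ℝ (⊤ : ℕ∞) u' := by
      rw [contDiff_iff_contDiffAt]
      intro x
      exact hαC.contDiffAt.sqrt (ne_of_gt (hαpos x))
    have hu'pos : ∀ x, 0 < u' x := fun x => Real.sqrt_pos.mpr (hαpos x)
    set u : Cinf E := ⟨fun v => u' (fun i => v i.1), t, u', hu'C, fun _ => rfl⟩ with huu
    have hwC : ContDiff ℝ (⊤ : ℕ∞) (fun x => (u' x)⁻¹) :=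
      hu'C.inv (fun x => ne_of_gt (hu'pos x))
    set w : Cinf E := ⟨fun v => (u' (fun i => v i.1))⁻¹, t, fun x => (u' x)⁻¹, hwC,
      fun _ => rfl⟩ with hww
    have huw : u * w = 1 := by
      apply Subtype.ext
      funext v
      exact mul_inv_cancel₀ (ne_of_gt (hu'pos _))
    refine ⟨u, (IsUnit.of_mul_eq_one w huw).map (Ideal.Quotient.mk I), ?_⟩
    apply hI
    refine ⟨φ, hφI, ?_⟩
    intro v hv
    rw [mem_Z_iff] at hv ⊢
    have hx : φ' (fun i : ↥t => v i.1) = 0 := by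
      rw [← hφeq v]; exact hv
    have husq : ev u v ^ 2 = α (fun i : ↥t => v i.1) := by
      show u' (fun i : ↥t => v i.1) ^ 2 = _
      rw [hu']
      exact Real.sq_sqrt (hαpos _).le
    rw [ev_sub, ev_pow, husq, hα]
    have : ev (g - f) v = h' (fun i : ↥t => v i.1) := hheq v
    rw [this]
    simp [hx]
end

section
/- Let E be an arbitrary set. (1) For every filter of zerosets Φ of ℝ^E, one has (Φ̌)^ = Φ, i.e. {Z(f) : f ∈ C^∞(ℝ^E), Z(f) ∈ Φ} = Φ. (2) For every ideal I of C^∞(ℝ^E), one has (Î)ˇ = {g ∈ C^∞(ℝ^E) : there exists f ∈ I with Z(g) = Z(f)}, and this set equals {g ∈ C^∞(ℝ^E) : there exists f ∈ I with Z(f) ⊆ Z(g)} (the C^∞-radical of I). -/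
/-- (1) For every filter of zerosets `Φ`, `(Φ̌)^ = Φ`.
(2) For every ideal `I ⊆ C^∞(ℝ^E)`,
`(Î)ˇ = {g : ∃ f ∈ I, Z(g) = Z(f)} = {g : ∃ f ∈ I, Z(f) ⊆ Z(g)}` (the `C^∞`-radical of `I`). -/
theorem statement9 (E : Type) :
    (∀ Φ : Set (Set (E → ℝ)), IsZFilter Φ → hatSet (checkSet Φ) = Φ) ∧
    (∀ I : Ideal (Cinf E),
      checkSet (hatI I) = {g : Cinf E | ∃ f ∈ I, Z g = Z f} ∧
      checkSet (hatI I) = {g : Cinf E | ∃ f ∈ I, Z f ⊆ Z g}) := by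
  constructor
  · intro Φ hΦ
    ext X
    constructor
    · rintro ⟨f, hf, rfl⟩
      exact hf
    · intro hX
      obtain ⟨f, rfl⟩ := hΦ.1 hX
      exact ⟨f, hX, rfl⟩
  · intro I
    have h1 : checkSet (hatI I) = {g : Cinf E | ∃ f ∈ I, Z g = Z f} := rfl
    refine ⟨h1, h1.trans ?_⟩
    ext g
    simp only [Set.mem_setOf_eq]
    constructor
    · rintro ⟨f, hf, he⟩
      exact ⟨f, hf, he.ge⟩
    · rintro ⟨f, hf, hsub⟩
      refine ⟨f * g, I.mul_mem_right g hf, ?_⟩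
      ext v
      have : ((f * g : Cinf E) : (E → ℝ) → ℝ) v = (f : (E → ℝ) → ℝ) v * (g : (E → ℝ) → ℝ) v := rfl
      simp only [Z, Set.mem_setOf_eq, this, mul_eq_zero]
      constructor
      · intro hg; exact Or.inr hg
      · rintro (hfv | hgv)
        · exact hsub hfv
        · exact hgv
end

section
/- Let E be an arbitrary set. The maps I ↦ Î := {Z(f) : f ∈ I} and Φ ↦ Φ̌ := {f ∈ C^∞(ℝ^E) : Z(f) ∈ Φ} are mutually inverse, inclusion-preserving bijections between the set of all filters of zerosets of ℝ^E and the set of all C^∞-radical ideals of C^∞(ℝ^E); moreover, they restrict to mutually inverse bijections between proper filters of zerosets and proper C^∞-radical ideals. -/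
lemma Z_sq_add {E : Type} (f g : Cinf E) : Z (f ^ 2 + g ^ 2) = Z f ∩ Z g := by
  ext v
  simp only [Z, Set.mem_setOf_eq, Set.mem_inter_iff, Subring.coe_add, Subring.coe_pow,
    Pi.add_apply, Pi.pow_apply]
  constructor
  · intro h
    constructor <;> nlinarith [sq_nonneg ((f : (E → ℝ) → ℝ) v), sq_nonneg ((g : (E → ℝ) → ℝ) v)]
  · rintro ⟨h1, h2⟩
    rw [h1, h2]; ring

lemma Z_zero {E : Type} : Z (0 : Cinf E) = Set.univ := by
  ext v; simp [Z]

lemma Z_one {E : Type} : Z (1 : Cinf E) = ∅ := by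
  ext v; simp [Z]

lemma Z_mem_zeroSets {E : Type} (f : Cinf E) : Z f ∈ zeroSets E := ⟨f, rfl⟩

lemma Z_mul_sub {E : Type} (c f : Cinf E) : Z f ⊆ Z (c * f) := by
  intro v hv
  simp only [Z, Set.mem_setOf_eq, Subring.coe_mul, Pi.mul_apply] at hv ⊢
  rw [hv, mul_zero]

/-- `I ↦ Î` and `Φ ↦ Φ̌` are mutually inverse inclusion-preserving
bijections between filters of zerosets of `ℝ^E` and `C^∞`-radical ideals of `C^∞(ℝ^E)`,
restricting to bijections between proper filters and proper `C^∞`-radical ideals. -/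
theorem statement10 (E : Type) :
    (∀ Φ : Set (Set (E → ℝ)), IsZFilter Φ →
      ∃ J : Ideal (Cinf E), (J : Set (Cinf E)) = checkSet Φ ∧ IsCinfRadical J ∧
        hatI J = Φ ∧ ((∅ : Set (E → ℝ)) ∉ Φ → J ≠ ⊤)) ∧
    (∀ I : Ideal (Cinf E), IsCinfRadical I →
      IsZFilter (hatI I) ∧ checkSet (hatI I) = (I : Set (Cinf E)) ∧
        (I ≠ ⊤ → (∅ : Set (E → ℝ)) ∉ hatI I)) ∧
    (∀ Φ₁ Φ₂ : Set (Set (E → ℝ)), IsZFilter Φ₁ → IsZFilter Φ₂ → Φ₁ ⊆ Φ₂ →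
      checkSet Φ₁ ⊆ checkSet Φ₂) ∧
    (∀ I₁ I₂ : Ideal (Cinf E), I₁ ≤ I₂ → hatI I₁ ⊆ hatI I₂) := by
  refine ⟨?_, ?_, ?_, ?_⟩
  · rintro Φ ⟨hsub, huniv, hinter, hup⟩
    refine ⟨{ carrier := checkSet Φ
              zero_mem' := by simpa [checkSet, Z_zero] using huniv
              add_mem' := by
                intro f g hf hg
                exact hup _ (hinter _ hf _ hg) _ (Z_mem_zeroSets _)
                  (by rw [← Z_sq_add]; intro v hv;
                      simp only [Z, Set.mem_setOf_eq, Subring.coe_add, Subring.coe_pow,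
                        Pi.add_apply, Pi.pow_apply] at hv ⊢
                      have h1 : (f : (E → ℝ) → ℝ) v = 0 := by
                        nlinarith [sq_nonneg ((f : (E → ℝ) → ℝ) v),
                          sq_nonneg ((g : (E → ℝ) → ℝ) v)]
                      have h2 : (g : (E → ℝ) → ℝ) v = 0 := by
                        nlinarith [sq_nonneg ((f : (E → ℝ) → ℝ) v),
                          sq_nonneg ((g : (E → ℝ) → ℝ) v)]
                      rw [h1, h2, add_zero])
              smul_mem' := by
                intro c f hf
                exact hup _ hf _ (Z_mem_zeroSets (c * f)) (Z_mul_sub c f) }, ?_, ?_, ?_, ?_⟩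
    · rfl
    · rintro g ⟨f, hfJ, hZ⟩
      exact hup _ hfJ _ (Z_mem_zeroSets g) hZ
    · ext X
      constructor
      · rintro ⟨f, hf, rfl⟩
        exact hf
      · intro hX
        obtain ⟨f, rfl⟩ := hsub hX
        exact ⟨f, hX, rfl⟩
    · intro hne htop
      have h1 : (1 : Cinf E) ∈ checkSet Φ := by
        have := Ideal.eq_top_iff_one _ |>.mp htop
        exact this
      rw [checkSet, Set.mem_setOf_eq, Z_one] at h1
      exact hne h1
  · intro I hI
    have hup : ∀ F ∈ hatI I, ∀ H ∈ zeroSets E, F ⊆ H → H ∈ hatI I := by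
      rintro F ⟨f, hf, rfl⟩ H ⟨g, rfl⟩ hFH
      exact ⟨g, hI g ⟨f, hf, hFH⟩, rfl⟩
    refine ⟨⟨?_, ⟨0, I.zero_mem, Z_zero.symm⟩, ?_, hup⟩, ?_, ?_⟩
    · rintro X ⟨f, _, rfl⟩; exact Z_mem_zeroSets f
    · rintro F ⟨f, hf, rfl⟩ G ⟨g, hg, rfl⟩
      exact ⟨f ^ 2 + g ^ 2, I.add_mem (I.pow_mem_of_mem hf 2 two_pos)
        (I.pow_mem_of_mem hg 2 two_pos), (Z_sq_add f g).symm⟩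
    · ext f
      constructor
      · rintro ⟨g, hg, hZ⟩
        exact hI f ⟨g, hg, hZ.symm.subset⟩
      · intro hf
        exact ⟨f, hf, rfl⟩
    · rintro hne ⟨f, hf, hZ⟩
      apply hne
      rw [Ideal.eq_top_iff_one]
      exact hI 1 ⟨f, hf, by rw [← hZ]; exact Set.empty_subset _⟩
  · rintro Φ₁ Φ₂ _ _ h f hf
    exact h hf
  · rintro I₁ I₂ h X ⟨f, hf, rfl⟩
    exact ⟨f, h hf, rfl⟩
end

section
/- Let E be an arbitrary set and let I be a proper C^∞-radical ideal of C^∞(ℝ^E). Then the canonical relation ≺ on the quotient ring C^∞(ℝ^E)/I is asymmetric: for all f, g ∈ C^∞(ℝ^E), it is not the case that both f + I ≺ g + I and g + I ≺ f + I hold. -/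
/-- For a proper `C^∞`-radical ideal `I ⊆ C^∞(ℝ^E)`, the canonical
relation `≺` on `C^∞(ℝ^E)/I` is asymmetric. -/
theorem statement15 (E : Type) (I : Ideal (Cinf E)) (hI : IsCinfRadical I)
    (hproper : (1 : Cinf E) ∉ I) (f g : Cinf E) :
    ¬ ((∃ u : Cinf E, IsUnit (Ideal.Quotient.mk I u) ∧ (g - f) - u ^ 2 ∈ I) ∧
       (∃ u : Cinf E, IsUnit (Ideal.Quotient.mk I u) ∧ (f - g) - u ^ 2 ∈ I)) := by
  rintro ⟨⟨u, hu, hu2⟩, ⟨v, hv, hv2⟩⟩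
  have hsum : u ^ 2 + v ^ 2 ∈ I := by
    have h1 := I.add_mem hu2 hv2
    have h2 : -(u ^ 2 + v ^ 2) ∈ I := by
      have : ((g - f) - u ^ 2) + ((f - g) - v ^ 2) = -(u ^ 2 + v ^ 2) := by ring
      rwa [this] at h1
    simpa using I.neg_mem h2
  have hZ : Z (u ^ 2 + v ^ 2) ⊆ Z u := by
    intro x hx
    have hx' : (u : (E → ℝ) → ℝ) x ^ 2 + (v : (E → ℝ) → ℝ) x ^ 2 = 0 := by
      simpa [Z] using hx
    have hu0 : (u : (E → ℝ) → ℝ) x = 0 := by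
      nlinarith [sq_nonneg ((u : (E → ℝ) → ℝ) x), sq_nonneg ((v : (E → ℝ) → ℝ) x)]
    simpa [Z] using hu0
  have huI : u ∈ I := hI u ⟨_, hsum, hZ⟩
  have h0 : (Ideal.Quotient.mk I u) = 0 := Ideal.Quotient.eq_zero_iff_mem.2 huI
  rcases hu with ⟨w, hw⟩
  have h1 : (1 : (Cinf E) ⧸ I) = 0 := by
    calc (1 : (Cinf E) ⧸ I) = ↑w * ↑w⁻¹ := (Units.mul_inv w).symm
      _ = 0 := by rw [hw, h0, zero_mul]
  exact hproper (Ideal.Quotient.eq_zero_iff_mem.mp (by rw [map_one]; exact h1))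
end

section
/- Let E be an arbitrary set. For every invertible element f of the ring C^∞(ℝ^E), there exists an invertible element u of C^∞(ℝ^E) such that f = u² or f = −u². In other words, the group of units of C^∞(ℝ^E) equals the union of the set of squares of units and the set of negatives of squares of units. -/
private lemma cinf_continuous {E : Type} (f : Cinf E) : Continuous (f : (E → ℝ) → ℝ) := by
  obtain ⟨s, g, hg, hfg⟩ := f.2
  have : (f : (E → ℝ) → ℝ) = fun v => g (fun i => v i.1) := funext hfg
  rw [this]
  exact hg.continuous.comp (continuous_pi fun i => continuous_apply i.1)

private lemma cinf_sq {E : Type} (f : Cinf E) (hpos : ∀ v, 0 < (f : (E → ℝ) → ℝ) v) :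
    ∃ u : Cinf E, f = u ^ 2 := by
  classical
  obtain ⟨s, g, hg, hfg⟩ := f.2
  have hgpos : ∀ w : (↥s → ℝ), 0 < g w := by
    intro w
    have := hpos (fun i => if h : i ∈ s then w ⟨i, h⟩ else 0)
    rw [hfg] at this
    convert this using 2
    funext i
    simp [i.2]
  have hsm : ContDiff ℝ (⊤ : ℕ∞) (fun w => Real.sqrt (g w)) := by
    rw [contDiff_iff_contDiffAt]
    intro w
    exact (Real.contDiffAt_sqrt (ne_of_gt (hgpos w))).comp w hg.contDiffAt
  refine ⟨⟨fun v => Real.sqrt ((f : (E → ℝ) → ℝ) v), s, fun w => Real.sqrt (g w), hsm,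
    fun v => by simp only [hfg v]⟩, ?_⟩
  ext v
  simp only [pow_two, Subring.coe_mul, Pi.mul_apply]
  show (f : (E → ℝ) → ℝ) v =
    Real.sqrt ((f : (E → ℝ) → ℝ) v) * Real.sqrt ((f : (E → ℝ) → ℝ) v)
  rw [Real.mul_self_sqrt (le_of_lt (hpos v))]

/-- Every invertible element of `C^∞(ℝ^E)` is either the square of an
invertible element or the negative of such a square:
`(C^∞(ℝ^E))^× = ((C^∞(ℝ^E))^×)² ∪ (−((C^∞(ℝ^E))^×)²)`. -/
theorem statement16 (E : Type) (f : Cinf E) (hf : IsUnit f) :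
    ∃ u : Cinf E, IsUnit u ∧ (f = u ^ 2 ∨ f = -u ^ 2) := by
  classical
  have hne : ∀ v, (f : (E → ℝ) → ℝ) v ≠ 0 := by
    obtain ⟨w, hw⟩ := hf
    intro v h0
    have h1 : (w.val * w.inv : Cinf E) = 1 := by rw [w.val_inv]
    have h2 : ((w.val * w.inv : Cinf E) : (E → ℝ) → ℝ) v = 1 := by rw [h1]; rfl
    rw [hw] at h2
    have : ((f * w.inv : Cinf E) : (E → ℝ) → ℝ) v
        = (f : (E → ℝ) → ℝ) v * ((w.inv : Cinf E) : (E → ℝ) → ℝ) v := rfl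
    rw [this, h0, zero_mul] at h2
    exact zero_ne_one h2
  have hc := cinf_continuous f
  rcases lt_or_gt_of_ne (hne (fun _ => 0)) with hneg | hpos
  · -- f is everywhere negative
    have hallneg : ∀ v, (f : (E → ℝ) → ℝ) v < 0 := by
      intro v
      rcases lt_or_gt_of_ne (hne v) with h | h
      · exact h
      · exfalso
        have := intermediate_value_univ (fun _ => (0:ℝ)) v hc
        have h0 : (0:ℝ) ∈ Set.Icc ((f : (E → ℝ) → ℝ) (fun _ => 0)) ((f : (E → ℝ) → ℝ) v) :=
          ⟨le_of_lt hneg, le_of_lt h⟩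
        obtain ⟨x, hx⟩ := this h0
        exact hne x hx
    obtain ⟨u, hu⟩ := cinf_sq (-f) (by
      intro v
      have : ((-f : Cinf E) : (E → ℝ) → ℝ) v = -((f : (E → ℝ) → ℝ) v) := rfl
      rw [this]
      linarith [hallneg v])
    refine ⟨u, ?_, Or.inr (by rw [← hu]; ring)⟩
    have : IsUnit (u * u) := by rw [← pow_two, ← hu]; exact hf.neg
    exact isUnit_of_mul_isUnit_left this
  · have hallpos : ∀ v, 0 < (f : (E → ℝ) → ℝ) v := by
      intro v
      rcases lt_or_gt_of_ne (hne v) with h | h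
      · exfalso
        have := intermediate_value_univ v (fun _ => (0:ℝ)) hc
        have h0 : (0:ℝ) ∈ Set.Icc ((f : (E → ℝ) → ℝ) v) ((f : (E → ℝ) → ℝ) (fun _ => 0)) :=
          ⟨le_of_lt h, le_of_lt hpos⟩
        obtain ⟨x, hx⟩ := this h0
        exact hne x hx
      · exact h
    obtain ⟨u, hu⟩ := cinf_sq f hallpos
    refine ⟨u, ?_, Or.inl hu⟩
    have : IsUnit (u * u) := by rw [← pow_two, ← hu]; exact hf
    exact isUnit_of_mul_isUnit_left this
end

section
/- Let E be an arbitrary set and let I be a prime, proper, C^∞-radical ideal of C^∞(ℝ^E), so that A := C^∞(ℝ^E)/I is a C^∞-reduced C^∞-domain. Then for every invertible element a of A there exists an invertible element u of A such that a = u² or a = −u². In other words, A^× = (A^×)² ∪ (−(A^×)²). -/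
lemma comp_pos_mem {E : Type} (p : Cinf E) (hp : ∀ v, 0 < (p : (E → ℝ) → ℝ) v)
    (φ : ℝ → ℝ) (hφ : ∀ x : ℝ, 0 < x → ContDiffAt ℝ (⊤ : ℕ∞) φ x) :
    IsCinf (fun v => φ ((p : (E → ℝ) → ℝ) v)) := by
  obtain ⟨s, g, hg, hfg⟩ := (p.2 : IsCinf (p : (E → ℝ) → ℝ))
  have hgpos : ∀ w : ↥s → ℝ, 0 < g w := by
    intro w
    classical
    set v : E → ℝ := fun e => if h : e ∈ s then w ⟨e, h⟩ else 0 with hv'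
    have hv : (fun i : ↥s => v i.1) = w := by
      funext i; simp [hv', i.2]
    have := hp v
    rw [hfg v, hv] at this
    exact this
  refine ⟨s, φ ∘ g, ?_, fun v => by simp [Function.comp, hfg v]⟩
  rw [contDiff_iff_contDiffAt]
  intro w
  exact (hφ (g w) (hgpos w)).comp w hg.contDiffAt

set_option maxHeartbeats 1000000 in
set_option synthInstance.maxHeartbeats 400000 in
/-- Let `I` be a prime, proper, `C^∞`-radical ideal of `C^∞(ℝ^E)` and
`A = C^∞(ℝ^E)/I` (a `C^∞`-reduced `C^∞`-domain). Then every unit of `A` is either the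
square of a unit or the negative of such a square: `A^× = (A^×)² ∪ (−(A^×)²)`. -/
theorem statement17 (E : Type) (I : Ideal (Cinf E)) (hprime : I.IsPrime)
    (hrad : IsCinfRadical I) (a : Cinf E ⧸ I) (ha : IsUnit a) :
    ∃ u : Cinf E ⧸ I, IsUnit u ∧ (a = u ^ 2 ∨ a = -u ^ 2) := by
  haveI := hprime
  obtain ⟨f, rfl⟩ := Ideal.Quotient.mk_surjective a
  obtain ⟨b, hb⟩ := ha.exists_right_inv
  obtain ⟨g, rfl⟩ := Ideal.Quotient.mk_surjective b
  have hI : f * g - 1 ∈ I := by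
    rw [← Ideal.Quotient.eq_zero_iff_mem, RingHom.map_sub, RingHom.map_mul, hb,
      RingHom.map_one, sub_self]
  have hppos : ∀ v, 0 < ((f ^ 2 + (f * g - 1) ^ 2 : Cinf E) : (E → ℝ) → ℝ) v := by
    intro v
    have hc : ((f ^ 2 + (f * g - 1) ^ 2 : Cinf E) : (E → ℝ) → ℝ) v
        = ((f : (E → ℝ) → ℝ) v) ^ 2
          + ((f : (E → ℝ) → ℝ) v * (g : (E → ℝ) → ℝ) v - 1) ^ 2 := by
      push_cast
      simp
    rw [hc]
    rcases eq_or_ne ((f : (E → ℝ) → ℝ) v) 0 with hf0 | hf0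
    · rw [hf0]; norm_num
    · positivity
  set p : Cinf E := f ^ 2 + (f * g - 1) ^ 2 with hp
  -- the fourth root of p
  have hq : IsCinf (fun v => Real.sqrt (Real.sqrt ((p : (E → ℝ) → ℝ) v))) := by
    exact comp_pos_mem p hppos (fun x => Real.sqrt (Real.sqrt x))
      (fun x hx => (Real.contDiffAt_sqrt (Real.sqrt_pos.mpr hx).ne').comp x
        (Real.contDiffAt_sqrt hx.ne'))
  set q : Cinf E := ⟨_, hq⟩ with hqdef
  have hqv : ∀ v, (q : (E → ℝ) → ℝ) v = Real.sqrt (Real.sqrt ((p : (E → ℝ) → ℝ) v)) :=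
    fun v => rfl
  have hqpos : ∀ v, 0 < (q : (E → ℝ) → ℝ) v := fun v => by
    rw [hqv v]; exact Real.sqrt_pos.mpr (Real.sqrt_pos.mpr (hppos v))
  have hq4 : (q ^ 2) ^ 2 = p := by
    apply Subtype.ext
    funext v
    have hc : (((q ^ 2) ^ 2 : Cinf E) : (E → ℝ) → ℝ) v
        = (((q : (E → ℝ) → ℝ) v) ^ 2) ^ 2 := by push_cast; simp
    rw [hc, hqv v, Real.sq_sqrt (Real.sqrt_nonneg _), Real.sq_sqrt (hppos v).le]
  -- inverse of q
  have hqinv : IsCinf (fun v => ((q : (E → ℝ) → ℝ) v)⁻¹) :=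
    comp_pos_mem q hqpos (fun x => x⁻¹) (fun x hx => contDiffAt_inv ℝ hx.ne')
  have hqunit : IsUnit q := by
    refine IsUnit.of_mul_eq_one (a := q) ⟨_, hqinv⟩ ?_
    apply Subtype.ext
    funext v
    show (q : (E → ℝ) → ℝ) v * ((q : (E → ℝ) → ℝ) v)⁻¹ = 1
    exact mul_inv_cancel₀ (hqpos v).ne'
  set u : Cinf E ⧸ I := Ideal.Quotient.mk I q with hu
  refine ⟨u, hqunit.map (Ideal.Quotient.mk I), ?_⟩
  have hmkp : Ideal.Quotient.mk I p = Ideal.Quotient.mk I (f ^ 2) := by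
    rw [hp]
    have h0 : Ideal.Quotient.mk I ((f * g - 1) ^ 2) = 0 := by
      rw [RingHom.map_pow, Ideal.Quotient.eq_zero_iff_mem.mpr hI]
      ring
    rw [RingHom.map_add, h0, add_zero]
  have key : (Ideal.Quotient.mk I f) ^ 2 = (u ^ 2) ^ 2 := by
    have h2 : (u ^ 2) ^ 2 = Ideal.Quotient.mk I ((q ^ 2) ^ 2) := by
      rw [hu, RingHom.map_pow, RingHom.map_pow]
    rw [h2, hq4, hmkp, RingHom.map_pow]
  have hz : (Ideal.Quotient.mk I f - u ^ 2) * (Ideal.Quotient.mk I f + u ^ 2) = 0 := by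
    have hring : (Ideal.Quotient.mk I f - u ^ 2) * (Ideal.Quotient.mk I f + u ^ 2)
        = (Ideal.Quotient.mk I f) ^ 2 - (u ^ 2) ^ 2 := by ring
    rw [hring, key, sub_self]
  rcases mul_eq_zero.mp hz with h1 | h1
  · exact Or.inl (sub_eq_zero.mp h1)
  · exact Or.inr (eq_neg_of_add_eq_zero_left h1)
end

section
/- Let E be an arbitrary set, let I be a C^∞-radical ideal of C^∞(ℝ^E), and let A := C^∞(ℝ^E)/I. Write A^× for the units of A, ΣA² for the set of finite sums of squares of elements of A, and (A^×)² := {u² : u ∈ A^×}. Then: (1) (ΣA²) ∩ A^× = (A^×)², i.e. every unit of A that is a finite sum of squares is the square of a unit; (2) (A^×)² + ΣA² = (A^×)², i.e. whenever u ∈ A^× and s ∈ ΣA², the element u² + s is the square of a unit of A; (3) every finite nonempty sum of squares of units of A is the square of a unit of A. -/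
set_option maxHeartbeats 1000000
set_option synthInstance.maxHeartbeats 400000

section Aux


/-- A pointwise positive smooth function is the square of a smooth unit. -/
lemma posSqrt {E : Type} (f : Cinf E) (hf : ∀ v, 0 < (f : (E → ℝ) → ℝ) v) :
    ∃ w : Cinf E, IsUnit w ∧ w * w = f := by
  obtain ⟨s, g, hg, hfg⟩ := f.2
  have hgpos : ∀ x : (↥s → ℝ), 0 < g x := by
    intro x
    classical
    set v : E → ℝ := fun e => if h : e ∈ s then x ⟨e, h⟩ else 0 with hv
    have hx : (fun i : ↥s => v i.1) = x := by
      funext i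
      simp [hv, i.2]
    have := hf v
    rwa [hfg v, hx] at this
  have hwmem : IsCinf (fun v => Real.sqrt ((f : (E → ℝ) → ℝ) v)) := by
    refine ⟨s, fun x => Real.sqrt (g x), hg.sqrt (fun x => ne_of_gt (hgpos x)), fun v => ?_⟩
    show Real.sqrt ((f : (E → ℝ) → ℝ) v) = Real.sqrt (g fun i => v i.1)
    rw [hfg v]
  have hwinvmem : IsCinf (fun v => (Real.sqrt ((f : (E → ℝ) → ℝ) v))⁻¹) := by
    refine ⟨s, fun x => (Real.sqrt (g x))⁻¹,
      (hg.sqrt (fun x => ne_of_gt (hgpos x))).inv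
        (fun x => ne_of_gt (Real.sqrt_pos.mpr (hgpos x))), fun v => ?_⟩
    show (Real.sqrt ((f : (E → ℝ) → ℝ) v))⁻¹ = (Real.sqrt (g fun i => v i.1))⁻¹
    rw [hfg v]
  refine ⟨⟨_, hwmem⟩, ?_, ?_⟩
  · refine isUnit_iff_exists_inv.mpr ⟨⟨_, hwinvmem⟩, ?_⟩
    ext v
    exact mul_inv_cancel₀ (ne_of_gt (Real.sqrt_pos.mpr (hf v)))
  · ext v
    exact Real.mul_self_sqrt (le_of_lt (hf v))

/-- Every sum of squares in the quotient has a pointwise nonnegative representative. -/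
lemma sosLift {E : Type} {I : Ideal (Cinf E)} {a : Cinf E ⧸ I} (ha : IsSumSq a) :
    ∃ f : Cinf E, Ideal.Quotient.mk I f = a ∧ ∀ v, 0 ≤ (f : (E → ℝ) → ℝ) v := by
  induction ha with
  | zero => exact ⟨0, map_zero _, fun v => by simp⟩
  | @sq_add b S _ ih =>
    obtain ⟨f, hf, hfpos⟩ := ih
    obtain ⟨g, hg⟩ := Ideal.Quotient.mk_surjective b
    refine ⟨g * g + f, by simp [map_add, map_mul, hf, hg], fun v => ?_⟩
    have : ((g * g + f : Cinf E) : (E → ℝ) → ℝ) v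
        = (g : (E → ℝ) → ℝ) v * (g : (E → ℝ) → ℝ) v + (f : (E → ℝ) → ℝ) v := by
      simp
    rw [this]
    exact add_nonneg (mul_self_nonneg _) (hfpos v)

/-- Key lemma: `u² + s` is the square of a unit whenever `u` is a unit and `s` a sum of
squares in the quotient. -/
lemma key {E : Type} {I : Ideal (Cinf E)} (u s : Cinf E ⧸ I) (hu : IsUnit u)
    (hs : IsSumSq s) : ∃ w : Cinf E ⧸ I, IsUnit w ∧ u ^ 2 + s = w ^ 2 := by
  obtain ⟨f, hf, hfpos⟩ := sosLift hs
  obtain ⟨v, hv⟩ := isUnit_iff_exists_inv.mp hu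
  obtain ⟨g, hg⟩ := Ideal.Quotient.mk_surjective u
  obtain ⟨g', hg'⟩ := Ideal.Quotient.mk_surjective v
  set h : Cinf E := g * g' - 1 with hh
  have hmk : Ideal.Quotient.mk I h = 0 := by
    simp [hh, map_sub, map_mul, hg, hg', hv]
  set F : Cinf E := g * g + f + h * h with hF
  have hFmk : Ideal.Quotient.mk I F = u ^ 2 + s := by
    simp [hF, map_add, map_mul, hg, hf, hmk, sq]
  have hFpos : ∀ x, 0 < (F : (E → ℝ) → ℝ) x := by
    intro x
    have hFx : (F : (E → ℝ) → ℝ) x = (g : (E → ℝ) → ℝ) x * (g : (E → ℝ) → ℝ) x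
        + (f : (E → ℝ) → ℝ) x
        + ((g : (E → ℝ) → ℝ) x * (g' : (E → ℝ) → ℝ) x - 1)
          * ((g : (E → ℝ) → ℝ) x * (g' : (E → ℝ) → ℝ) x - 1) := by
      simp [hF, hh]
    rw [hFx]
    rcases eq_or_ne ((g : (E → ℝ) → ℝ) x) 0 with hgx | hgx
    · rw [hgx]
      nlinarith [hfpos x]
    · have h1 : 0 < (g : (E → ℝ) → ℝ) x * (g : (E → ℝ) → ℝ) x :=
        mul_self_pos.mpr hgx
      nlinarith [hfpos x, mul_self_nonneg ((g : (E → ℝ) → ℝ) x * (g' : (E → ℝ) → ℝ) x - 1)]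
  obtain ⟨w, hw, hww⟩ := posSqrt F hFpos
  refine ⟨Ideal.Quotient.mk I w, hw.map _, ?_⟩
  rw [← hFmk, ← hww, sq, map_mul]

end Aux

/-- Let `I` be a `C^∞`-radical ideal of `C^∞(ℝ^E)` and `A = C^∞(ℝ^E)/I`.
Then: (1) every unit of `A` that is a finite sum of squares is the square of a unit;
(2) `(A^×)² + ΣA² = (A^×)²`; (3) every finite nonempty sum of squares of units of `A`
is the square of a unit of `A`. -/
theorem statement18 (E : Type) (I : Ideal (Cinf E)) (hI : IsCinfRadical I) :
    (∀ a : Cinf E ⧸ I, IsSumSq a → IsUnit a → ∃ u : Cinf E ⧸ I, IsUnit u ∧ a = u ^ 2) ∧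
    (∀ u s : Cinf E ⧸ I, IsUnit u → IsSumSq s →
      ∃ w : Cinf E ⧸ I, IsUnit w ∧ u ^ 2 + s = w ^ 2) ∧
    (∀ (k : ℕ), 0 < k → ∀ u : Fin k → Cinf E ⧸ I, (∀ i, IsUnit (u i)) →
      ∃ w : Cinf E ⧸ I, IsUnit w ∧ (∑ i, (u i) ^ 2) = w ^ 2) := by
  refine ⟨?_, fun u s hu hs => key u s hu hs, ?_⟩
  · -- part (1)
    intro a ha hau
    obtain ⟨f, hf, hfpos⟩ := sosLift ha
    obtain ⟨b, hb⟩ := isUnit_iff_exists_inv.mp hau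
    obtain ⟨g, hg⟩ := Ideal.Quotient.mk_surjective b
    set h : Cinf E := f * g - 1 with hh
    have hmk : Ideal.Quotient.mk I h = 0 := by
      simp [hh, map_sub, map_mul, hf, hg, hb]
    set F : Cinf E := f + h * h with hF
    have hFmk : Ideal.Quotient.mk I F = a := by
      simp [hF, map_add, map_mul, hf, hmk]
    have hFpos : ∀ x, 0 < (F : (E → ℝ) → ℝ) x := by
      intro x
      have hFx : (F : (E → ℝ) → ℝ) x = (f : (E → ℝ) → ℝ) x
          + ((f : (E → ℝ) → ℝ) x * (g : (E → ℝ) → ℝ) x - 1)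
            * ((f : (E → ℝ) → ℝ) x * (g : (E → ℝ) → ℝ) x - 1) := by
        simp [hF, hh]
      rw [hFx]
      rcases eq_or_ne ((f : (E → ℝ) → ℝ) x) 0 with hfx | hfx
      · rw [hfx]; norm_num
      · have := lt_of_le_of_ne (hfpos x) (Ne.symm hfx)
        nlinarith [mul_self_nonneg ((f : (E → ℝ) → ℝ) x * (g : (E → ℝ) → ℝ) x - 1)]
    obtain ⟨w, hw, hww⟩ := posSqrt F hFpos
    exact ⟨Ideal.Quotient.mk I w, hw.map _, by rw [← hFmk, ← hww, sq, map_mul]⟩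
  · -- part (3)
    intro k hk u hu
    obtain ⟨m, rfl⟩ := Nat.exists_eq_succ_of_ne_zero (Nat.pos_iff_ne_zero.mp hk)
    rw [Fin.sum_univ_succ]
    refine key (u 0) _ (hu 0) ?_
    have : ∀ i : Fin m, u i.succ ^ 2 = u i.succ * u i.succ := fun i => sq (u i.succ)
    simp only [this]
    exact IsSumSq.sum_mul_self _ _
end
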